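/- arXiv:2104.06873 — 6 statements merged into one kernel-verified Lean document; each statement's English description precedes it below -/
import Mathlib

section
/- Let f : Set U → ℝ be nonnegative, monotone, and submodular on a finite ground set U, let k ≥ 1 be an integer, and let A ⊆ U with the property that for every element u ∈ U \ A, f(A ∪ {u}) - f(A) < f(A)/k. Then for any set O ⊆ U with |O| ≤ k, f(O) ≤ 2·f(A). -/
theorem stmt5 {U : Type*} [Fintype U] [DecidableEq U] (f : Finset U → ℝ)
    (hnonneg : ∀ S, 0 ≤ f S)
    (hmono : ∀ S T : Finset U, S ⊆ T → f S ≤ f T)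
    (hsubmod : ∀ S T : Finset U, ∀ u : U, S ⊆ T → u ∉ T →
      f (insert u T) - f T ≤ f (insert u S) - f S)
    (k : ℕ) (hk : 1 ≤ k) (A : Finset U)
    (hA : ∀ u : U, u ∉ A → f (insert u A) - f A < f A / k)
    (O : Finset U) (hO : O.card ≤ k) :
    f O ≤ 2 * f A := by
  have key : ∀ S : Finset U, f (A ∪ S) - f A ≤ ∑ u ∈ S, (f (insert u A) - f A) := by
    intro S
    induction S using Finset.induction_on with
    | empty => simp [Finset.union_empty]
    | @insert a S' ha ih =>
      rw [Finset.sum_insert ha]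
      by_cases haA : a ∈ A ∪ S'
      · have h1 : A ∪ insert a S' = A ∪ S' := by
          rw [Finset.union_insert, Finset.insert_eq_self.2 haA]
        have h2 : 0 ≤ f (insert a A) - f A :=
          sub_nonneg.2 (hmono A (insert a A) (Finset.subset_insert a A))
        rw [h1]; linarith
      · have h1 : A ∪ insert a S' = insert a (A ∪ S') := by
          rw [Finset.union_insert]
        have h2 := hsubmod A (A ∪ S') a (Finset.subset_union_left) haA
        rw [h1]; linarith
  have h1 : f O ≤ f (A ∪ O) := hmono O (A ∪ O) Finset.subset_union_right
  have h2 := key O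
  have h3 : ∑ u ∈ O, (f (insert u A) - f A) ≤ ∑ u ∈ O, f A / k := by
    apply Finset.sum_le_sum
    intro u hu
    by_cases huA : u ∈ A
    · have : insert u A = A := Finset.insert_eq_self.2 huA
      rw [this]
      simp
      exact div_nonneg (hnonneg A) (by positivity)
    · exact (hA u huA).le
  have h4 : ∑ u ∈ O, f A / k = O.card * (f A / k) := by
    rw [Finset.sum_const, nsmul_eq_mul]
  have h5 : (O.card : ℝ) * (f A / k) ≤ k * (f A / k) := by
    apply mul_le_mul_of_nonneg_right
    · exact_mod_cast hO
    · exact div_nonneg (hnonneg A) (by positivity)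
  have h6 : (k : ℝ) * (f A / k) = f A := by
    field_simp
  linarith
end

section
/- Let f : Set U → ℝ be nonnegative, monotone, and submodular on a finite ground set U, let k ≥ 1, and let A ⊆ U with |A| > k. Suppose A' ⊆ A with |A'| = k satisfies: for an ordering a'_1, ..., a'_k of A' and letting A'_i = {a'_1,...,a'_i}, A'_0 = ∅, we have f((A \ A') ∪ A'_{i-1} ∪ {a'_i}) - f((A \ A') ∪ A'_{i-1}) ≥ f((A \ A') ∪ A'_{i-1})/k for each i = 1,...,k. Then f(A) ≤ 2·f(A'). -/
theorem stmt6 {U : Type*} [Fintype U] [DecidableEq U] (f : Finset U → ℝ)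
    (hnonneg : ∀ S, 0 ≤ f S)
    (hmono : ∀ S T : Finset U, S ⊆ T → f S ≤ f T)
    (hsubmod : ∀ S T : Finset U, ∀ u : U, S ⊆ T → u ∉ T →
      f (insert u T) - f T ≤ f (insert u S) - f S)
    (k : ℕ) (hk : 1 ≤ k) (A : Finset U) (hcard : k < A.card)
    (a : ℕ → U) (hinj : Set.InjOn a (Set.Iio k))
    (A' : Finset U) (hA' : A' = (Finset.range k).image a) (hsub : A' ⊆ A)
    (hgain : ∀ i < k,
      f (insert (a i) ((A \ A') ∪ (Finset.range i).image a))
        - f ((A \ A') ∪ (Finset.range i).image a)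
      ≥ f ((A \ A') ∪ (Finset.range i).image a) / k) :
    f A ≤ 2 * f A' := by
  have hkpos : (0:ℝ) < (k:ℝ) := by exact_mod_cast Nat.lt_of_lt_of_le Nat.zero_lt_one hk
  set B : ℕ → Finset U := fun i => (A \ A') ∪ (Finset.range i).image a with hB
  set C : ℕ → Finset U := fun i => (Finset.range i).image a with hC
  have hnotmem : ∀ i, i < k → a i ∉ B i := by
    intro i hi
    simp only [hB, Finset.mem_union, Finset.mem_sdiff, Finset.mem_image, Finset.mem_range,
      not_or, not_and, not_exists]
    constructor
    · intro _
      simp only [hA', Finset.mem_image, Finset.mem_range, not_not]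
      exact ⟨i, hi, rfl⟩
    · intro j hj hji
      have : j = i := hinj (by simp [Set.mem_Iio]; omega) (by simpa using hi) hji
      omega
  have hins : ∀ i, B (i+1) = insert (a i) (B i) := by
    intro i
    simp [hB, Finset.range_add_one, Finset.image_insert, Finset.union_insert]
  have hinsC : ∀ i, C (i+1) = insert (a i) (C i) := by
    intro i
    simp [hC, Finset.range_add_one, Finset.image_insert]
  have hBk : B k = A := by
    rw [hB]
    simp only [← hA']
    exact Finset.sdiff_union_of_subset hsub
  -- growth
  have hgrow : ∀ i, i ≤ k → (1 + 1/(k:ℝ))^i * f (B 0) ≤ f (B i) := by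
    intro i
    induction i with
    | zero => intro _; simp
    | succ n ih =>
      intro hn
      have hn' : n < k := hn
      have h1 := hgain n hn'
      have h2 := ih (le_of_lt hn')
      have h3 : f (B n) / k ≤ f (B (n+1)) - f (B n) := by
        rw [hins n]; exact h1
      have h4 : (0:ℝ) ≤ f (B 0) := hnonneg _
      have h5 : (0:ℝ) ≤ (1 + 1/(k:ℝ))^n := by positivity
      have : (1 + 1/(k:ℝ)) * f (B n) ≤ f (B (n+1)) := by
        have := div_le_iff₀ hkpos |>.mp (le_trans (le_refl _) h3)
        ring_nf
        ring_nf at h3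
        nlinarith [h3]
      calc (1 + 1/(k:ℝ))^(n+1) * f (B 0) = (1 + 1/(k:ℝ)) * ((1 + 1/(k:ℝ))^n * f (B 0)) := by ring
        _ ≤ (1 + 1/(k:ℝ)) * f (B n) := by
            have h6 : (0:ℝ) ≤ 1 + 1/(k:ℝ) := by positivity
            exact mul_le_mul_of_nonneg_left h2 h6
        _ ≤ f (B (n+1)) := this
  have hpow : (2:ℝ) ≤ (1 + 1/(k:ℝ))^k := by
    have h0 : (0:ℝ) ≤ 1/(k:ℝ) := by positivity
    have := one_add_mul_le_pow (a := 1/(k:ℝ)) (by linarith : (-2:ℝ) ≤ 1/(k:ℝ)) k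
    have hkne : (k:ℝ) ≠ 0 := ne_of_gt hkpos
    have h2k : (k:ℝ) * (1/(k:ℝ)) = 1 := by field_simp
    linarith
  have hhalf : 2 * f (B 0) ≤ f A := by
    have h1 := hgrow k le_rfl
    rw [hBk] at h1
    nlinarith [hnonneg (B 0), hpow]
  -- telescoping
  have htel : ∀ i, i ≤ k → f (B i) - f (B 0) ≤ f (C i) - f (C 0) := by
    intro i
    induction i with
    | zero => intro _; simp
    | succ n ih =>
      intro hn
      have hn' : n < k := hn
      have hCsub : C n ⊆ B n := Finset.subset_union_right
      have hsm := hsubmod (C n) (B n) (a n) hCsub (hnotmem n hn')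
      have h2 := ih (le_of_lt hn')
      rw [← hins n, ← hinsC n] at hsm
      linarith
  have hC0 : (0:ℝ) ≤ f (C 0) := hnonneg _
  have hCk : C k = A' := by rw [hC, hA']
  have htelk := htel k le_rfl
  rw [hBk, hCk] at htelk
  linarith
end

section
/- Let f : Set U → ℝ be nonnegative, monotone, and submodular on a finite ground set U. Suppose A_+ ⊆ U can be written as A_+ = A ∪ B_1 ∪ ... ∪ B_m with pairwise disjoint sets where f(A) ≥ k^{ℓ·i}·f(B_i) for each i = 1,...,m, for integers k ≥ 2 and ℓ ≥ 1. Then f(A_+) ≤ f(A)·(1/(1 - k^{-ℓ})). -/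
private lemma subadd {U : Type*} [DecidableEq U] (f : Finset U → ℝ)
    (hnonneg : ∀ S, 0 ≤ f S)
    (hsubmod : ∀ S T : Finset U, ∀ u : U, S ⊆ T → u ∉ T →
      f (insert u T) - f T ≤ f (insert u S) - f S) :
    ∀ T S : Finset U, f (S ∪ T) ≤ f S + f T := by
  intro T
  induction T using Finset.strongInduction with
  | _ T ih =>
    intro S
    by_cases hTS : T ⊆ S
    · have : S ∪ T = S := Finset.union_eq_left.mpr hTS
      rw [this]
      linarith [hnonneg T]
    · obtain ⟨u, huT, huS⟩ := Finset.not_subset.mp hTS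
      have hT' : T.erase u ⊂ T := Finset.erase_ssubset huT
      have hu' : u ∉ S ∪ T.erase u := by
        simp [huS]
      have hsub : T.erase u ⊆ S ∪ T.erase u := Finset.subset_union_right
      have key := hsubmod (T.erase u) (S ∪ T.erase u) u hsub hu'
      have h1 : insert u (S ∪ T.erase u) = S ∪ T := by
        rw [← Finset.union_insert, Finset.insert_erase huT]
      have h2 : insert u (T.erase u) = T := Finset.insert_erase huT
      rw [h1, h2] at key
      have := ih (T.erase u) hT' S
      linarith

theorem stmt9 {U : Type*} [Fintype U] [DecidableEq U] (f : Finset U → ℝ)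
    (hnonneg : ∀ S, 0 ≤ f S)
    (hmono : ∀ S T : Finset U, S ⊆ T → f S ≤ f T)
    (hsubmod : ∀ S T : Finset U, ∀ u : U, S ⊆ T → u ∉ T →
      f (insert u T) - f T ≤ f (insert u S) - f S)
    (k l m : ℕ) (hk : 2 ≤ k) (hl : 1 ≤ l)
    (A : Finset U) (B : ℕ → Finset U) (Aplus : Finset U)
    (hAplus : Aplus = A ∪ (Finset.Icc 1 m).biUnion B)
    (hdisjA : ∀ i ∈ Finset.Icc 1 m, Disjoint A (B i))
    (hdisjB : ∀ i ∈ Finset.Icc 1 m, ∀ j ∈ Finset.Icc 1 m, i ≠ j →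
      Disjoint (B i) (B j))
    (hval : ∀ i ∈ Finset.Icc 1 m, (k : ℝ) ^ (l * i) * f (B i) ≤ f A) :
    f Aplus ≤ f A * (1 / (1 - 1 / (k : ℝ) ^ l)) := by
  -- Step 1: f(Aplus) ≤ f A + ∑ f (B i)
  have hsa := subadd f hnonneg hsubmod
  have step1 : ∀ s : Finset ℕ, f (A ∪ s.biUnion B) ≤ f A + ∑ i ∈ s, f (B i) := by
    intro s
    induction s using Finset.induction with
    | empty => simp
    | @insert a s ha ih =>
      rw [Finset.biUnion_insert, Finset.sum_insert ha]
      have h1 : A ∪ (B a ∪ s.biUnion B) = (A ∪ s.biUnion B) ∪ B a := by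
        rw [Finset.union_comm (B a), Finset.union_assoc]
      rw [h1]
      calc f ((A ∪ s.biUnion B) ∪ B a) ≤ f (A ∪ s.biUnion B) + f (B a) :=
            hsa (B a) (A ∪ s.biUnion B)
        _ ≤ f A + ∑ i ∈ s, f (B i) + f (B a) := by linarith
        _ = f A + (f (B a) + ∑ i ∈ s, f (B i)) := by ring
  -- basic facts about r = 1/k^l
  have hkR : (1 : ℝ) < (k : ℝ) := by exact_mod_cast Nat.lt_of_lt_of_le one_lt_two hk
  have hk1 : (1 : ℝ) < (k : ℝ) ^ l := one_lt_pow₀ hkR (by omega)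
  set r : ℝ := 1 / (k : ℝ) ^ l with hr
  have hr0 : 0 < r := by positivity
  have hr1 : r < 1 := by
    rw [hr, div_lt_one (by positivity)]; exact hk1
  have h1r : 0 < 1 - r := by linarith
  have hB : ∀ i ∈ Finset.Icc 1 m, f (B i) ≤ f A * r ^ i := by
    intro i hi
    have hv := hval i hi
    have hkli : (0:ℝ) < ((k:ℝ)^l)^i := by positivity
    rw [hr, div_pow, one_pow, mul_one_div, le_div_iff₀ hkli]
    calc f (B i) * ((k:ℝ)^l)^i = (k:ℝ)^(l*i) * f (B i) := by rw [pow_mul]; ring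
      _ ≤ f A := hv
  -- geometric sum bound
  have hgeo : ∑ i ∈ Finset.Icc 1 m, r ^ i ≤ r / (1 - r) := by
    have hre : ∑ i ∈ Finset.Icc 1 m, r ^ i = r * ∑ i ∈ Finset.range m, r ^ i := by
      rw [Finset.mul_sum, show Finset.Icc 1 m = Finset.Ico 1 (m+1) from (Finset.Ico_add_one_right_eq_Icc 1 m).symm,
        Finset.sum_Ico_eq_sum_range]
      simp only [Nat.add_sub_cancel]
      apply Finset.sum_congr rfl
      intro i _
      rw [pow_add, pow_one]
    rw [hre, geom_sum_eq (ne_of_lt hr1), show (r ^ m - 1) / (r - 1) = (1 - r ^ m) / (1 - r) by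
      rw [div_eq_div_iff (by linarith) (by linarith)]; ring, ← mul_div_assoc]
    apply div_le_div_of_nonneg_right ?_ h1r.le
    nlinarith [pow_nonneg hr0.le m]
  -- put it together
  have hsum : ∑ i ∈ Finset.Icc 1 m, f (B i) ≤ f A * (r / (1 - r)) := by
    calc ∑ i ∈ Finset.Icc 1 m, f (B i) ≤ ∑ i ∈ Finset.Icc 1 m, f A * r ^ i :=
          Finset.sum_le_sum hB
      _ = f A * ∑ i ∈ Finset.Icc 1 m, r ^ i := by rw [Finset.mul_sum]
      _ ≤ f A * (r / (1 - r)) := mul_le_mul_of_nonneg_left hgeo (hnonneg A)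
  rw [hAplus, show (1 : ℝ) / (1 - 1 / (k : ℝ) ^ l) = 1 / (1 - r) from by rw [hr]]
  have harith : f A + f A * (r / (1 - r)) = f A * (1 / (1 - r)) := by
    field_simp
    ring
  calc f (A ∪ (Finset.Icc 1 m).biUnion B) ≤ f A + ∑ i ∈ Finset.Icc 1 m, f (B i) :=
        step1 _
    _ ≤ f A + f A * (r / (1 - r)) := by linarith
    _ = f A * (1 / (1 - r)) := harith
end

section
/- Let f : Set U → ℝ be nonnegative, monotone, and submodular on a finite ground set U, let k ≥ 2 and ℓ ≥ 2 be integers. Suppose A, A_+ ⊆ U with A ⊆ A_+ satisfy f(A_+) ≤ (1 + 1/(k^ℓ - 1))·f(A), and suppose for every o ∈ U \ A_+ there exists a set A_o ⊆ A_+ with f(A_+ ∪ {o}) - f(A_+) ≤ f(A_o)/k and f(A_o) ≤ f(A). Then for any O ⊆ U with |O| ≤ k, f(O) ≤ (2 + 1/(k^ℓ - 1))·f(A). -/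
theorem stmt10 {U : Type*} [Fintype U] [DecidableEq U] (f : Finset U → ℝ)
    (hnonneg : ∀ S, 0 ≤ f S)
    (hmono : ∀ S T : Finset U, S ⊆ T → f S ≤ f T)
    (hsubmod : ∀ S T : Finset U, ∀ u : U, S ⊆ T → u ∉ T →
      f (insert u T) - f T ≤ f (insert u S) - f S)
    (k l : ℕ) (hk : 2 ≤ k) (hl : 2 ≤ l)
    (A Aplus : Finset U) (hsub : A ⊆ Aplus)
    (hAplus : f Aplus ≤ (1 + 1 / ((k : ℝ) ^ l - 1)) * f A)
    (hthresh : ∀ o : U, o ∉ Aplus → ∃ Ao : Finset U, Ao ⊆ Aplus ∧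
      f (insert o Aplus) - f Aplus ≤ f Ao / k ∧ f Ao ≤ f A)
    (O : Finset U) (hO : O.card ≤ k) :
    f O ≤ (2 + 1 / ((k : ℝ) ^ l - 1)) * f A := by
  -- Each marginal term is bounded
  have hterm : ∀ o : U, f (insert o Aplus) - f Aplus ≤ f A / k := by
    intro o
    by_cases ho : o ∈ Aplus
    · rw [Finset.insert_eq_self.mpr ho]
      simp only [sub_self]
      exact div_nonneg (hnonneg A) (by positivity)
    · obtain ⟨Ao, _, h1, h2⟩ := hthresh o ho
      refine h1.trans (div_le_div_of_nonneg_right h2 (by positivity))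
  -- Key submodularity bound
  have key : ∀ S : Finset U, f (Aplus ∪ S) - f Aplus ≤
      ∑ o ∈ S, (f (insert o Aplus) - f Aplus) := by
    intro S
    induction S using Finset.induction with
    | empty => simp
    | @insert a S ha ih =>
      rw [Finset.sum_insert ha]
      by_cases haS : a ∈ Aplus ∪ S
      · rw [Finset.union_insert, Finset.insert_eq_self.mpr haS]
        have : 0 ≤ f (insert a Aplus) - f Aplus :=
          sub_nonneg.mpr (hmono _ _ (Finset.subset_insert _ _))
        linarith
      · have h1 : f (insert a (Aplus ∪ S)) - f (Aplus ∪ S) ≤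
            f (insert a Aplus) - f Aplus :=
          hsubmod Aplus (Aplus ∪ S) a Finset.subset_union_left haS
        rw [Finset.union_insert]
        linarith
  have hsum : ∑ o ∈ O, (f (insert o Aplus) - f Aplus) ≤ O.card * (f A / k) :=
    le_trans (Finset.sum_le_card_nsmul O _ _ fun o _ => hterm o) (by simp [nsmul_eq_mul])
  have hcard : (O.card : ℝ) * (f A / k) ≤ f A := by
    have hk' : (0:ℝ) < k := by positivity
    have hOk : (O.card : ℝ) ≤ k := by exact_mod_cast hO
    rw [mul_div_assoc', div_le_iff₀ hk']
    nlinarith [hnonneg A]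
  have h1 : f O ≤ f (Aplus ∪ O) := hmono _ _ Finset.subset_union_right
  have h2 := key O
  have := hnonneg A
  linarith
end

section
/- Let f : Set U → ℝ be nonnegative, monotone, and submodular on a finite ground set U, let k ≥ 1, and let OPT = max{f(O) : O ⊆ U, |O| ≤ k}. Suppose a sequence of sets ∅ = A_0 ⊆ A_1 ⊆ ... ⊆ A_k with |A_i| = i satisfies f(A_{i+1}) - f(A_i) ≥ ((1-ε)/k)·(OPT - f(A_i)) for all 0 ≤ i < k, where 0 < ε < 1. Then f(A_k) ≥ (1 - e^{-(1-ε)})·OPT. -/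
theorem stmt15 {U : Type*} [Fintype U] [DecidableEq U] (f : Finset U → ℝ)
    (hnonneg : ∀ S, 0 ≤ f S)
    (hmono : ∀ S T : Finset U, S ⊆ T → f S ≤ f T)
    (hsubmod : ∀ S T : Finset U, ∀ u : U, S ⊆ T → u ∉ T →
      f (insert u T) - f T ≤ f (insert u S) - f S)
    (k : ℕ) (hk : 1 ≤ k) (OPT : ℝ)
    (hOPT : IsGreatest {x : ℝ | ∃ O : Finset U, O.card ≤ k ∧ f O = x} OPT)
    (ε : ℝ) (hε0 : 0 < ε) (hε1 : ε < 1)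
    (A : ℕ → Finset U) (hA0 : A 0 = ∅)
    (hchain : ∀ i < k, A i ⊆ A (i + 1))
    (hcard : ∀ i ≤ k, (A i).card = i)
    (hgain : ∀ i < k, f (A (i + 1)) - f (A i) ≥ ((1 - ε) / k) * (OPT - f (A i))) :
    f (A k) ≥ (1 - Real.exp (-(1 - ε))) * OPT := by
  have hkpos : (0:ℝ) < k := by exact_mod_cast hk
  set c : ℝ := (1 - ε) / k with hc
  have hc0 : 0 ≤ c := div_nonneg (by linarith) hkpos.le
  have hc1 : c ≤ 1 := by
    rw [hc, div_le_one hkpos]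
    have : (1:ℝ) ≤ k := by exact_mod_cast hk
    linarith
  have hOPT0 : 0 ≤ OPT := le_trans (hnonneg ∅) (hOPT.2 ⟨∅, by simp⟩)
  have key : ∀ i ≤ k, OPT - f (A i) ≤ (1 - c)^i * OPT := by
    intro i hi
    induction i with
    | zero => simpa [hA0] using hnonneg ∅
    | succ n ih =>
      have hn : n < k := hi
      have h1 := hgain n hn
      have h2 := ih (le_of_lt hn)
      have : OPT - f (A (n+1)) ≤ (1 - c) * (OPT - f (A n)) := by
        nlinarith
      calc OPT - f (A (n+1)) ≤ (1 - c) * (OPT - f (A n)) := this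
        _ ≤ (1 - c) * ((1 - c)^n * OPT) := by
            apply mul_le_mul_of_nonneg_left h2 (by linarith)
        _ = (1 - c)^(n+1) * OPT := by ring
  have hk' := key k le_rfl
  have hpow : (1 - c)^k ≤ Real.exp (-(1 - ε)) := by
    have h1 : 1 - c ≤ Real.exp (-c) := by
      have := Real.add_one_le_exp (-c); linarith
    calc (1 - c)^k ≤ (Real.exp (-c))^k :=
          pow_le_pow_left₀ (by linarith) h1 k
      _ = Real.exp (-c * k) := by rw [← Real.exp_nat_mul]; ring_nf
      _ = Real.exp (-(1 - ε)) := by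
          congr 1; rw [hc]; field_simp
  nlinarith [mul_le_mul_of_nonneg_right hpow hOPT0]
end

section
/- Let f : Set U → ℝ be nonnegative, monotone, and submodular on a finite ground set U, let k ≥ 1, 0 < ε < 1/2, and let OPT = max{f(O) : |O| ≤ k}. Suppose A ⊆ U satisfies: for all o ∈ U \ A, f(A ∪ {o}) - f(A) ≤ OPT/(8k(1-ε)). Then f(A) ≥ (3/4)·OPT. -/
theorem stmt17 {U : Type*} [Fintype U] [DecidableEq U] (f : Finset U → ℝ)
    (hnonneg : ∀ S, 0 ≤ f S)
    (hmono : ∀ S T : Finset U, S ⊆ T → f S ≤ f T)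
    (hsubmod : ∀ S T : Finset U, ∀ u : U, S ⊆ T → u ∉ T →
      f (insert u T) - f T ≤ f (insert u S) - f S)
    (k : ℕ) (hk : 1 ≤ k) (ε : ℝ) (hε0 : 0 < ε) (hε1 : ε < 1 / 2) (OPT : ℝ)
    (hOPT : IsGreatest {x : ℝ | ∃ O : Finset U, O.card ≤ k ∧ f O = x} OPT)
    (A : Finset U)
    (hA : ∀ o : U, o ∉ A → f (insert o A) - f A ≤ OPT / (8 * k * (1 - ε))) :
    f A ≥ (3 / 4) * OPT := by
  obtain ⟨⟨O, hOc, hOf⟩, hub⟩ := hOPT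
  have hOPT0 : 0 ≤ OPT := le_trans (hnonneg ∅) (hub ⟨∅, by simp [hk.trans' (Nat.zero_lt_one)]⟩)
  -- key submodularity lemma
  have key : ∀ S : Finset U, f (A ∪ S) - f A ≤ ∑ o ∈ S \ A, (f (insert o A) - f A) := by
    intro S
    induction S using Finset.induction with
    | empty => simp
    | @insert a S ha ih =>
      have hunion : A ∪ insert a S = insert a (A ∪ S) := by
        ext x; simp [or_comm, or_left_comm]
      by_cases haA : a ∈ A
      · have h1 : insert a (A ∪ S) = A ∪ S := Finset.insert_eq_self.mpr (Finset.mem_union_left S haA)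
        have h2 : (insert a S) \ A = S \ A := by
          rw [Finset.insert_sdiff_of_mem _ haA]
        rw [hunion, h1, h2]; exact ih
      · have haAS : a ∉ A ∪ S := by simp [haA, ha]
        have h2 : (insert a S) \ A = insert a (S \ A) := Finset.insert_sdiff_of_notMem _ haA
        have h3 : a ∉ S \ A := by simp [ha]
        rw [hunion, h2, Finset.sum_insert h3]
        have := hsubmod A (A ∪ S) a Finset.subset_union_left haAS
        linarith [ih]
  have hcard : ((O \ A).card : ℝ) ≤ (k : ℝ) := by
    exact_mod_cast le_trans (Finset.card_le_card (Finset.sdiff_subset)) hOc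
  have hbound : ∀ o ∈ O \ A, f (insert o A) - f A ≤ OPT / (8 * k * (1 - ε)) := by
    intro o ho
    exact hA o (Finset.mem_sdiff.mp ho).2
  have hsum : ∑ o ∈ O \ A, (f (insert o A) - f A) ≤ ((O \ A).card : ℝ) * (OPT / (8 * k * (1 - ε))) := by
    calc ∑ o ∈ O \ A, (f (insert o A) - f A) ≤ ∑ _o ∈ O \ A, OPT / (8 * k * (1 - ε)) :=
          Finset.sum_le_sum hbound
      _ = ((O \ A).card : ℝ) * (OPT / (8 * k * (1 - ε))) := by
          rw [Finset.sum_const, nsmul_eq_mul]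
  have hε2 : (0:ℝ) < 1 - ε := by linarith
  have hk1 : (1:ℝ) ≤ (k : ℝ) := by exact_mod_cast hk
  have hden0 : (0:ℝ) < 8 * k * (1 - ε) := by positivity
  have hb0 : 0 ≤ OPT / (8 * k * (1 - ε)) := div_nonneg hOPT0 hden0.le
  have hstep : ((O \ A).card : ℝ) * (OPT / (8 * k * (1 - ε))) ≤ OPT / 4 := by
    have h1 : ((O \ A).card : ℝ) * (OPT / (8 * k * (1 - ε))) ≤ (k:ℝ) * (OPT / (8 * k * (1 - ε))) :=
      mul_le_mul_of_nonneg_right hcard hb0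
    have h2 : (k:ℝ) * (OPT / (8 * k * (1 - ε))) = OPT / (8 * (1 - ε)) := by
      field_simp
    have h3 : OPT / (8 * (1 - ε)) ≤ OPT / 4 := by
      apply div_le_div_of_nonneg_left hOPT0 (by norm_num) <;> linarith
    linarith
  have hmoneq : f O ≤ f (A ∪ O) := hmono O (A ∪ O) Finset.subset_union_right
  have := key O
  linarith [hOf ▸ hmoneq]
end
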